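/- Let A=(S,R) be a finite argumentation network and let h be an assignment taking only the two values (⊤,⊤) and (⊥,⊥) on atoms of S. Then t ⊨_h Θ⁰_A, where Θ⁰_A = ⋀_{x∈S}(x ↔ ⋀_{yRx}¬y), if and only if λ_h is a stable extension of A (a complete extension with λ_h(x)≠und for all x). -/

import Mathlib

/-- The three Caminada labels. -/
inductive Label where
  | in_ : Label
  | out : Label
  | und : Label
deriving DecidableEq

/-- Propositional intuitionistic formulas over atoms `α`, with the
distinguished constant `nconst` (the paper's `n`). -/
inductive Form (α : Type) where
  | atom : α → Form α
  | nconst : Form α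
  | top : Form α
  | bot : Form α
  | and : Form α → Form α → Form α
  | or : Form α → Form α → Form α
  | imp : Form α → Form α → Form α
  | neg : Form α → Form α

/-- Forcing in the two-world Kripke model: world `false` is `t`, world `true`
is `s`, with `t < s` (i.e. the Bool order). `h` assigns to each atom its pair
of truth values (at `t`, at `s`). The constant `n` has value `(⊥,⊤)`. -/
def force {α : Type} (h : α → Bool × Bool) : Bool → Form α → Prop
  | w, .atom x => (if w then (h x).2 else (h x).1) = true
  | w, .nconst => w = true
  | _, .top => True
  | _, .bot => False
  | w, .and A B => force h w A ∧ force h w B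
  | w, .or A B => force h w A ∨ force h w B
  | w, .imp A B => ∀ v : Bool, w ≤ v → force h v A → force h v B
  | w, .neg A => ∀ v : Bool, w ≤ v → ¬ force h v A

/-- An assignment is legitimate when no atom gets the forbidden value `(⊤,⊥)`. -/
def Persistent {α : Type} (h : α → Bool × Bool) : Prop :=
  ∀ x, (h x).1 = true → (h x).2 = true

def bigAnd {α : Type} : List (Form α) → Form α
  | [] => .top
  | f :: fs => .and f (bigAnd fs)

def bigOr {α : Type} : List (Form α) → Form α
  | [] => .bot
  | f :: fs => .or f (bigOr fs)

/-- The list of attackers of `x` in the network `(α, R)`. -/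
noncomputable def attackers {α : Type} [Fintype α] (R : α → α → Prop) [DecidableRel R] (x : α) : List α :=
  (Finset.univ.filter (fun y => R y x)).toList

/-- (a1)  `x → (n ∨ ⋀_{yRx} ¬y)` -/
noncomputable def fa1 {α : Type} [Fintype α] (R : α → α → Prop) [DecidableRel R] (x : α) : Form α :=
  .imp (.atom x) (.or .nconst (bigAnd ((attackers R x).map (fun y => .neg (.atom y)))))

/-- (a2)  `(⋀_{yRx} ¬y) → (n ∨ x)` -/
noncomputable def fa2 {α : Type} [Fintype α] (R : α → α → Prop) [DecidableRel R] (x : α) : Form α :=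
  .imp (bigAnd ((attackers R x).map (fun y => .neg (.atom y)))) (.or .nconst (.atom x))

/-- (b1)  `¬x → (n ∨ ⋁_{yRx} y)` -/
noncomputable def fb1 {α : Type} [Fintype α] (R : α → α → Prop) [DecidableRel R] (x : α) : Form α :=
  .imp (.neg (.atom x)) (.or .nconst (bigOr ((attackers R x).map (fun y => .atom y))))

/-- (b2)  `(⋁_{yRx} y) → (¬x ∨ n)` -/
noncomputable def fb2 {α : Type} [Fintype α] (R : α → α → Prop) [DecidableRel R] (x : α) : Form α :=
  .imp (bigOr ((attackers R x).map (fun y => .atom y))) (.or (.neg (.atom x)) .nconst)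

/-- `h` is a model of the theory `Δ_A`: every formula of `Δ_A` holds at `t`. -/
def ModelsDelta {α : Type} [Fintype α] (h : α → Bool × Bool)
    (R : α → α → Prop) [DecidableRel R] : Prop :=
  ∀ x, force h false (fa1 R x) ∧ force h false (fa2 R x) ∧
    force h false (fb1 R x) ∧ force h false (fb2 R x)

/-- Caminada labelling / complete extension of the network `(α, R)`. -/
def IsCompleteExt {α : Type} (R : α → α → Prop) (l : α → Label) : Prop :=
  (∀ x, l x = .in_ ↔ ∀ y, R y x → l y = .out) ∧
  (∀ x, l x = .out ↔ ∃ y, R y x ∧ l y = .in_) ∧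
  (∀ x, l x = .und ↔ ((∀ y, R y x → l y ≠ .in_) ∧ ∃ y, R y x ∧ l y = .und))

/-- The labelling `λ_h` induced by an assignment `h`. -/
def lamOf {α : Type} (h : α → Bool × Bool) (x : α) : Label :=
  if h x = (true, true) then .in_ else if h x = (false, false) then .out else .und

/-- The assignment `h_λ` induced by a labelling `λ`. -/
def assignOf {α : Type} (l : α → Label) (x : α) : Bool × Bool :=
  match l x with
  | .in_ => (true, true)
  | .out => (false, false)
  | .und => (false, true)

/-- The conjunct `x ↔ ⋀_{yRx} ¬y` of `Θ⁰_A`, written as a pair of implications. -/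
noncomputable def theta0 {α : Type} [Fintype α] (R : α → α → Prop) [DecidableRel R]
    (x : α) : Form α :=
  .and (.imp (.atom x) (bigAnd ((attackers R x).map (fun y => .neg (.atom y)))))
       (.imp (bigAnd ((attackers R x).map (fun y => .neg (.atom y)))) (.atom x))

section Aux
variable {α : Type}

lemma mem_attackers' [Fintype α] (R : α → α → Prop) [DecidableRel R] {x y : α} :
    y ∈ attackers R x ↔ R y x := by
  simp [attackers]

lemma atom_force' (h : α → Bool × Bool)
    (htv : ∀ x, h x = (true, true) ∨ h x = (false, false))
    (x : α) (v : Bool) : force h v (.atom x) ↔ h x = (true, true) := by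
  rcases htv x with hx | hx <;> cases v <;> simp [force, hx]

lemma negAtom_force' (h : α → Bool × Bool)
    (htv : ∀ x, h x = (true, true) ∨ h x = (false, false))
    (y : α) (v : Bool) : force h v (.neg (.atom y)) ↔ h y = (false, false) := by
  constructor
  · intro hf
    rcases htv y with hy | hy
    · exact absurd ((atom_force' h htv y true).mpr hy) (hf true (by simp))
    · exact hy
  · intro hy v' _ hf
    rw [atom_force' h htv] at hf
    simp [hy] at hf

lemma bigAnd_negs_force (h : α → Bool × Bool)
    (htv : ∀ x, h x = (true, true) ∨ h x = (false, false))
    (L : List α) (v : Bool) :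
    force h v (bigAnd (L.map (fun y => Form.neg (.atom y)))) ↔
      ∀ y ∈ L, h y = (false, false) := by
  induction L with
  | nil => simp [bigAnd, force]
  | cons a L ih =>
    constructor
    · rintro ⟨h1, h2⟩ y hy
      rw [List.mem_cons] at hy
      rcases hy with rfl | hy
      · exact (negAtom_force' h htv y v).mp h1
      · exact (ih.mp h2) y hy
    · intro hall
      exact ⟨(negAtom_force' h htv a v).mpr (hall a (List.mem_cons_self (a := a) (l := L))),
        ih.mpr (fun y hy => hall y (List.mem_cons_of_mem _ hy))⟩

lemma theta0_force_iff [Fintype α] (R : α → α → Prop) [DecidableRel R]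
    (h : α → Bool × Bool)
    (htv : ∀ x, h x = (true, true) ∨ h x = (false, false)) (x : α) :
    force h false (theta0 R x) ↔
      ((h x = (true, true) → ∀ y, R y x → h y = (false, false)) ∧
       ((∀ y, R y x → h y = (false, false)) → h x = (true, true))) := by
  have hB : ∀ v, force h v (bigAnd ((attackers R x).map (fun y => Form.neg (.atom y)))) ↔
      ∀ y, R y x → h y = (false, false) := by
    intro v
    rw [bigAnd_negs_force h htv]
    constructor
    · intro hall y hy; exact hall y ((mem_attackers' R).mpr hy)
    · intro hall y hy; exact hall y ((mem_attackers' R).mp hy)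
  constructor
  · rintro ⟨h1, h2⟩
    constructor
    · intro hx y hy
      exact (hB false).mp (h1 false (le_refl _) ((atom_force' h htv x false).mpr hx)) y hy
    · intro hall
      exact (atom_force' h htv x false).mp (h2 false (le_refl _) ((hB false).mpr hall))
  · rintro ⟨h1, h2⟩
    constructor
    · intro v _ hx
      exact (hB v).mpr (h1 ((atom_force' h htv x v).mp hx))
    · intro v _ hb
      exact (atom_force' h htv x v).mpr (h2 ((hB v).mp hb))

lemma lamOf_in_iff (h : α → Bool × Bool) (x : α) :
    lamOf h x = .in_ ↔ h x = (true, true) := by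
  unfold lamOf
  by_cases hx : h x = (true, true) <;> simp [hx]
  by_cases hx2 : h x = (false, false) <;> simp [hx2]

lemma lamOf_out_iff (h : α → Bool × Bool)
    (htv : ∀ x, h x = (true, true) ∨ h x = (false, false)) (x : α) :
    lamOf h x = .out ↔ h x = (false, false) := by
  unfold lamOf
  rcases htv x with hx | hx <;> simp [hx]

lemma lamOf_ne_und (h : α → Bool × Bool)
    (htv : ∀ x, h x = (true, true) ∨ h x = (false, false)) (x : α) :
    lamOf h x ≠ .und := by
  unfold lamOf
  rcases htv x with hx | hx <;> simp [hx]

end Aux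

/-- For a two-valued assignment `h` (only values `(⊤,⊤)` and `(⊥,⊥)`):
`t ⊨_h Θ⁰_A` iff `λ_h` is a stable extension of `A`, i.e. a complete extension
with no `und` label. -/
theorem stmt8 {α : Type} [Fintype α] [Nonempty α] (R : α → α → Prop) [DecidableRel R]
    (h : α → Bool × Bool)
    (htv : ∀ x, h x = (true, true) ∨ h x = (false, false)) :
    (∀ x, force h false (theta0 R x)) ↔
      (IsCompleteExt R (lamOf h) ∧ ∀ x, lamOf h x ≠ .und) := by
  classical
  have hund := lamOf_ne_und h htv
  have hio : ∀ x, lamOf h x = .in_ ∨ lamOf h x = .out := by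
    intro x
    rcases htv x with hx | hx
    · exact Or.inl ((lamOf_in_iff h x).mpr hx)
    · exact Or.inr ((lamOf_out_iff h htv x).mpr hx)
  constructor
  · intro hΘ
    have hT : ∀ x, (h x = (true, true) → ∀ y, R y x → h y = (false, false)) ∧
        ((∀ y, R y x → h y = (false, false)) → h x = (true, true)) :=
      fun x => (theta0_force_iff R h htv x).mp (hΘ x)
    have hC1 : ∀ x, lamOf h x = .in_ ↔ ∀ y, R y x → lamOf h y = .out := by
      intro x
      rw [lamOf_in_iff]
      constructor
      · intro hx y hy
        exact (lamOf_out_iff h htv y).mpr ((hT x).1 hx y hy)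
      · intro hall
        exact (hT x).2 (fun y hy => (lamOf_out_iff h htv y).mp (hall y hy))
    refine ⟨⟨hC1, ?_, ?_⟩, hund⟩
    · intro x
      constructor
      · intro hx
        by_contra hno
        push_neg at hno
        have : ∀ y, R y x → lamOf h y = .out := by
          intro y hy
          rcases hio y with h' | h'
          · exact absurd h' (hno y hy)
          · exact h'
        have := (hC1 x).mpr this
        rw [this] at hx; exact Label.noConfusion hx
      · rintro ⟨y, hy, hyin⟩
        rcases hio x with hx | hx
        · have := (hC1 x).mp hx y hy
          rw [hyin] at this; exact Label.noConfusion this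
        · exact hx
    · intro x
      constructor
      · intro hx; exact absurd hx (hund x)
      · rintro ⟨-, y, -, hy⟩; exact absurd hy (hund y)
  · rintro ⟨⟨hC1, hC2, -⟩, -⟩
    intro x
    rw [theta0_force_iff R h htv x]
    constructor
    · intro hx y hy
      have := (hC1 x).mp ((lamOf_in_iff h x).mpr hx) y hy
      exact (lamOf_out_iff h htv y).mp this
    · intro hall
      exact (lamOf_in_iff h x).mp ((hC1 x).mpr
        (fun y hy => (lamOf_out_iff h htv y).mpr (hall y hy)))
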